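/- Let p be a prime and n ≥ 2 an integer. For all nonzero complex numbers x_2, …, x_{2n−1} and every index i with 2 ≤ i ≤ 2n−1, the 2×2n matrix B'_{2,2n} is unchanged when x_i is replaced by x_i^{−1}: B'_{2,2n}(x_2, …, x_{i−1}, x_i^{−1}, x_{i+1}, …, x_{2n−1}) = B'_{2,2n}(x_2, …, x_{2n−1}). (Equivalently, every entry of B'_{2,2n}(X_2,…,X_{2n−1}) is a polynomial in the quantities X_2 + X_2^{−1}, …, X_{2n−1} + X_{2n−1}^{−1}.) -/

import Mathlib

open Matrix

noncomputable section

/-- The coefficient `b_{t,j,l,p}(X)`. -/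
def bcoef (p l t j : ℕ) (X : ℂ) : ℂ :=
  if t + 2 = j then ((p : ℂ) ^ ((2 * l : ℤ) - 2 * j + 2) - 1) * (p : ℂ) ^ ((j : ℤ) - 1 - l) * X
  else if t + 1 = j then 1 + (p : ℂ) ^ ((j : ℤ) - 1 - l) * ((p : ℂ) - 1) * X + X ^ 2
  else if t = j then (p : ℂ) ^ ((j : ℤ) - l) * X
  else 0

/-- The `l × (l+1)` matrix `B_{l,l+1}(X) = (b_{t,j,l,p}(X))_{0≤t≤l−1, 0≤j≤l}`. -/
def Bmat (p l : ℕ) (X : ℂ) : Matrix (Fin l) (Fin (l + 1)) ℂ :=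
  Matrix.of fun t j => bcoef p l (t : ℕ) (j : ℕ) X

/-- Auxiliary product: `BprodAux p X m = B_{2,3}(X 2) * B_{3,4}(X 3) * ⋯ * B_{m+2,m+3}(X (m+2))`,
a `2 × (m+3)` matrix; thus `BprodAux p X (2n−3) = B_{2,2n}(X_2,…,X_{2n−1})` for `n ≥ 2`. -/
def BprodAux (p : ℕ) (X : ℕ → ℂ) : (m : ℕ) → Matrix (Fin 2) (Fin (m + 3)) ℂ
  | 0 => Bmat p 2 (X 2)
  | m + 1 => BprodAux p X m * Bmat p (m + 3) (X (m + 3))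

/-- `B'_{2,2n}(X_2,…,X_{2n−1}) = (∏_{i=2}^{2n−1} X_i)⁻¹ · B_{2,2n}(X_2,…,X_{2n−1})`. -/
def Bprime (p n : ℕ) (X : ℕ → ℂ) : Matrix (Fin 2) (Fin (2 * n - 3 + 3)) ℂ :=
  (∏ i ∈ Finset.Icc 2 (2 * n - 1), X i)⁻¹ • BprodAux p X (2 * n - 3)

lemma bmat_inv (p l : ℕ) (X : ℂ) (hX : X ≠ 0) :
    Bmat p l X⁻¹ = (X ^ 2)⁻¹ • Bmat p l X := by
  ext t j
  simp only [Bmat, bcoef, Matrix.smul_apply, Matrix.of_apply, smul_eq_mul]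
  split_ifs <;> field_simp <;> ring

lemma prodAux_congr (p : ℕ) (X Y : ℕ → ℂ) :
    ∀ m, (∀ j, 2 ≤ j → j ≤ m + 2 → X j = Y j) → BprodAux p X m = BprodAux p Y m := by
  intro m
  induction m with
  | zero => intro h; simp [BprodAux, h 2 le_rfl (by omega)]
  | succ m ih =>
      intro h
      simp only [BprodAux]
      rw [ih (fun j hj hj' => h j hj (by omega)), h (m + 3) (by omega) (by omega)]

lemma prodAux_update (p : ℕ) (X : ℕ → ℂ) (i₀ : ℕ) (h1 : 2 ≤ i₀) (hX : X i₀ ≠ 0) :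
    ∀ m, i₀ ≤ m + 2 →
      BprodAux p (Function.update X i₀ (X i₀)⁻¹) m = ((X i₀) ^ 2)⁻¹ • BprodAux p X m := by
  intro m
  induction m with
  | zero =>
      intro h
      have : i₀ = 2 := by omega
      subst this
      simp only [BprodAux, Function.update_self]
      exact bmat_inv p 2 (X 2) hX
  | succ m ih =>
      intro h
      simp only [BprodAux]
      rcases Nat.lt_or_ge i₀ (m + 3) with hlt | hge
      · rw [ih (by omega), Function.update_of_ne (by omega), Matrix.smul_mul]
      · have : i₀ = m + 3 := by omega
        subst this
        rw [prodAux_congr p _ X m (fun j hj hj' => Function.update_of_ne (by omega) _ _),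
          Function.update_self, bmat_inv p _ _ hX, Matrix.mul_smul]

/-- for a prime `p`, `n ≥ 2`, nonzero complex numbers `x_2, …, x_{2n−1}`
and any index `2 ≤ i₀ ≤ 2n−1`, the matrix `B'_{2,2n}` is unchanged when `x_{i₀}` is
replaced by `x_{i₀}⁻¹`. -/
theorem statement12 (p n : ℕ) (hp : p.Prime) (hn : 2 ≤ n) (X : ℕ → ℂ)
    (hX : ∀ i, 2 ≤ i → i ≤ 2 * n - 1 → X i ≠ 0)
    (i₀ : ℕ) (h1 : 2 ≤ i₀) (h2 : i₀ ≤ 2 * n - 1) :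
    Bprime p n (Function.update X i₀ (X i₀)⁻¹) = Bprime p n X := by
  have hX0 : X i₀ ≠ 0 := hX i₀ h1 h2
  have hmem : i₀ ∈ Finset.Icc 2 (2 * n - 1) := Finset.mem_Icc.mpr ⟨h1, h2⟩
  unfold Bprime
  rw [prodAux_update p X i₀ h1 hX0 (2 * n - 3) (by omega),
    Finset.prod_update_of_mem hmem, smul_smul,
    ← Finset.mul_prod_erase _ X hmem]
  rw [Finset.sdiff_singleton_eq_erase]
  congr 1
  rw [sq, ← mul_inv]
  congr 1
  field_simp
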